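/- In any ABA⁺ framework, every <-admissible set of assumptions is contained in some <-preferred extension. -/

import Mathlib

universe u

/-- An ABA framework: a deductive system `(ℒ, R)`, a nonempty set of assumptions,
and a total contrary map on assumptions (modelled as a total map on `ℒ`). -/
structure ABAF (L : Type u) where
  rules : Set (L × List L)
  asms : Set L
  asms_nonempty : asms.Nonempty
  contrary : L → L

namespace ABAF

variable {L : Type u}

/-- There is a deduction for `φ` supported by `S` (and rules of `F`):
a finite tree with root `φ`, leaves labelled by `⊤` or elements of `S`,
children of non-leaf nodes given by bodies of rules with matching heads. -/
inductive Ded (F : ABAF L) (S : Set L) : L → Prop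
  | assumption {φ : L} : φ ∈ S → Ded F S φ
  | rule {φ : L} {body : List L} : (φ, body) ∈ F.rules →
      (∀ ψ ∈ body, Ded F S ψ) → Ded F S φ

/-- The conclusions of `E`: all sentences deducible from subsets of `E`. -/
def cn (F : ABAF L) (E : Set L) : Set L := {φ | F.Ded E φ}

/-- The closure of `E`: all assumptions deducible from `E`. -/
def cl (F : ABAF L) (E : Set L) : Set L := F.cn E ∩ F.asms

/-- `E` is closed iff it coincides with its closure. -/
def Closed (F : ABAF L) (E : Set L) : Prop := F.cl E = E

/-- `A` attacks `B` iff some `A' ⊆ A` supports a deduction of the contrary of some `β ∈ B`. -/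
def Attacks (F : ABAF L) (A B : Set L) : Prop :=
  ∃ A' ⊆ A, ∃ β ∈ B, F.Ded A' (F.contrary β)

/-- A framework is flat iff every set of assumptions is closed. -/
def Flat (F : ABAF L) : Prop := ∀ E ⊆ F.asms, F.Closed E

def ConflictFree (F : ABAF L) (E : Set L) : Prop := ¬ F.Attacks E E

def Defends (F : ABAF L) (E A : Set L) : Prop :=
  ∀ B ⊆ F.asms, F.Closed B → F.Attacks B A → F.Attacks E B

def Admissible (F : ABAF L) (E : Set L) : Prop :=
  E ⊆ F.asms ∧ F.Closed E ∧ F.ConflictFree E ∧ F.Defends E E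

def Preferred (F : ABAF L) (E : Set L) : Prop :=
  F.Admissible E ∧ ∀ E', F.Admissible E' → E ⊆ E' → E' = E

def Complete (F : ABAF L) (E : Set L) : Prop :=
  F.Admissible E ∧ ∀ A ⊆ F.asms, F.Defends E A → A ⊆ E

def Stable (F : ABAF L) (E : Set L) : Prop :=
  E ⊆ F.asms ∧ F.Closed E ∧ F.ConflictFree E ∧
    ∀ β ∈ F.asms, β ∉ E → F.Attacks E {β}

def WellFounded (F : ABAF L) (E : Set L) : Prop :=
  E = ⋂₀ {E' | F.Complete E'}

def Ideal (F : ABAF L) (E : Set L) : Prop :=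
  (F.Admissible E ∧ ∀ P, F.Preferred P → E ⊆ P) ∧
    ∀ E', (F.Admissible E' ∧ ∀ P, F.Preferred P → E' ⊆ P) → E ⊆ E' → E' = E

end ABAF

/-- An ABA⁺ framework: an ABA framework with a transitive preference relation on assumptions. -/
structure ABAPlus (L : Type u) extends ABAF L where
  le : L → L → Prop
  le_trans : ∀ a b c, le a b → le b c → le a c

namespace ABAPlus

variable {L : Type u}

/-- The strict counterpart of the preference relation. -/
def lt (F : ABAPlus L) (a b : L) : Prop := F.le a b ∧ ¬ F.le b a

/-- `A` <-attacks `B`: either a normal attack (a deduction from `A' ⊆ A` of the contrary of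
some `β ∈ B` with no supporting assumption strictly less preferred than `β`),
or a reverse attack (a deduction from `B' ⊆ B` of the contrary of some `α ∈ A` using
some assumption strictly less preferred than `α`). -/
def LtAttacks (F : ABAPlus L) (A B : Set L) : Prop :=
  (∃ A' ⊆ A, ∃ β ∈ B, F.toABAF.Ded A' (F.contrary β) ∧ ∀ α' ∈ A', ¬ F.lt α' β) ∨
  (∃ B' ⊆ B, ∃ α ∈ A, F.toABAF.Ded B' (F.contrary α) ∧ ∃ β' ∈ B', F.lt β' α)

def LtConflictFree (F : ABAPlus L) (E : Set L) : Prop := ¬ F.LtAttacks E E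

def LtDefends (F : ABAPlus L) (E A : Set L) : Prop :=
  ∀ B ⊆ F.asms, F.toABAF.Closed B → F.LtAttacks B A → F.LtAttacks E B

def LtAdmissible (F : ABAPlus L) (E : Set L) : Prop :=
  E ⊆ F.asms ∧ F.toABAF.Closed E ∧ F.LtConflictFree E ∧ F.LtDefends E E

def LtPreferred (F : ABAPlus L) (E : Set L) : Prop :=
  F.LtAdmissible E ∧ ∀ E', F.LtAdmissible E' → E ⊆ E' → E' = E

def LtComplete (F : ABAPlus L) (E : Set L) : Prop :=
  F.LtAdmissible E ∧ ∀ A ⊆ F.asms, F.LtDefends E A → A ⊆ E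

def LtStable (F : ABAPlus L) (E : Set L) : Prop :=
  E ⊆ F.asms ∧ F.toABAF.Closed E ∧ F.LtConflictFree E ∧
    ∀ β ∈ F.asms, β ∉ E → F.LtAttacks E {β}

def LtWellFounded (F : ABAPlus L) (E : Set L) : Prop :=
  E = ⋂₀ {E' | F.LtComplete E'}

def LtIdeal (F : ABAPlus L) (E : Set L) : Prop :=
  (F.LtAdmissible E ∧ ∀ P, F.LtPreferred P → E ⊆ P) ∧
    ∀ E', (F.LtAdmissible E' ∧ ∀ P, F.LtPreferred P → E' ⊆ P) → E ⊆ E' → E' = E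

/-- The Axiom of Weak Contraposition. -/
def WCP (F : ABAPlus L) : Prop :=
  ∀ A ⊆ F.asms, ∀ β ∈ F.asms,
    F.toABAF.Ded A (F.contrary β) → (∃ α' ∈ A, F.lt α' β) →
    ∃ α ∈ A, F.lt α β ∧ (∀ α'' ∈ A, F.lt α'' β → ¬ F.lt α'' α) ∧
      ∃ Aα ⊆ (A \ {α}) ∪ {β}, F.toABAF.Ded Aα (F.contrary α)

end ABAPlus


namespace ABAPlus

variable {L : Type u}

lemma ded_mono (F : ABAF L) {S T : Set L} (hST : S ⊆ T) {φ : L}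
    (h : F.Ded S φ) : F.Ded T φ := by
  induction h with
  | assumption hφ => exact ABAF.Ded.assumption (hST hφ)
  | rule hr _ ih => exact ABAF.Ded.rule hr ih

lemma ded_finite (F : ABAF L) {S : Set L} {φ : L} (h : F.Ded S φ) :
    ∃ T : Set L, T ⊆ S ∧ T.Finite ∧ F.Ded T φ := by
  classical
  induction h with
  | @assumption φ hφ =>
    exact ⟨{φ}, Set.singleton_subset_iff.2 hφ, Set.finite_singleton φ,
      ABAF.Ded.assumption rfl⟩
  | @rule φ body hr _ ih =>
    choose f hf₁ hf₂ hf₃ using ih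
    set g : L → Set L := fun ψ => if h : ψ ∈ body then f ψ h else ∅ with hg
    refine ⟨⋃ ψ ∈ {x | x ∈ body}, g ψ, ?_, ?_, ?_⟩
    · intro x hx
      simp only [Set.mem_iUnion, Set.mem_setOf_eq] at hx
      obtain ⟨ψ, hψ, hx⟩ := hx
      rw [hg] at hx; simp only [hψ, dif_pos] at hx
      exact hf₁ _ _ hx
    · refine Set.Finite.biUnion body.finite_toSet (fun ψ hψ => ?_)
      simp only [Set.mem_setOf_eq] at hψ
      rw [hg]; simp only [dif_pos hψ]; exact hf₂ _ _
    · refine ABAF.Ded.rule hr fun ψ hψ => ?_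
      refine ded_mono F ?_ (hf₃ ψ hψ)
      intro x hx
      simp only [Set.mem_iUnion, Set.mem_setOf_eq]
      exact ⟨ψ, hψ, by rw [hg]; simp only [hψ, dif_pos]; exact hx⟩

lemma chain_absorb {c : Set (Set L)} (hc : IsChain (· ⊆ ·) c)
    (hne : c.Nonempty) {T : Set L} (hT : T.Finite) (hTc : T ⊆ ⋃₀ c) :
    ∃ A ∈ c, T ⊆ A := by
  classical
  refine Set.Finite.induction_on (motive := fun T _ => T ⊆ ⋃₀ c → ∃ A ∈ c, T ⊆ A) T hT
    (fun _ => ⟨hne.choose, hne.choose_spec, Set.empty_subset _⟩) ?_ hTc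
  intro a T _ _ ih hTc'
  obtain ⟨A, hA, hTA⟩ := ih (fun x hx => hTc' (Set.mem_insert_of_mem a hx))
  obtain ⟨B, hB, haB⟩ := hTc' (Set.mem_insert a T)
  rcases hc.total hA hB with hAB | hBA
  · exact ⟨B, hB, Set.insert_subset haB (hTA.trans hAB)⟩
  · exact ⟨A, hA, Set.insert_subset (hBA haB) hTA⟩

lemma ltAttacks_mono_left (F : ABAPlus L) {A A' B : Set L} (hAA : A ⊆ A')
    (h : F.LtAttacks A B) : F.LtAttacks A' B := by
  rcases h with ⟨S, hS, β, hβ, hd, hmin⟩ | ⟨S, hS, α, hα, hd, hβ'⟩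
  · exact Or.inl ⟨S, hS.trans hAA, β, hβ, hd, hmin⟩
  · exact Or.inr ⟨S, hS, α, hAA hα, hd, hβ'⟩

end ABAPlus

/-- Every <-admissible set of assumptions is contained in some
<-preferred extension. -/
theorem ABAPlus.ltAdmissible_subset_ltPreferred {L : Type u} (F : ABAPlus L)
    (E : Set L) (h : F.LtAdmissible E) :
    ∃ E', F.LtPreferred E' ∧ E ⊆ E' := by
  classical
  set S : Set (Set L) := {A | F.LtAdmissible A ∧ E ⊆ A} with hS
  have key : ∀ c ⊆ S, IsChain (· ⊆ ·) c → c.Nonempty →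
      ∃ ub ∈ S, ∀ s ∈ c, s ⊆ ub := by
    intro c hcS hchain hcne
    refine ⟨⋃₀ c, ⟨⟨?_, ?_, ?_, ?_⟩, ?_⟩, fun s hs => Set.subset_sUnion_of_mem hs⟩
    · -- subset of asms
      intro x hx
      obtain ⟨A, hA, hxA⟩ := hx
      exact (hcS hA).1.1 hxA
    · -- closed
      apply Set.Subset.antisymm
      · rintro φ ⟨hded, hasm⟩
        obtain ⟨T, hTsub, hTfin, hTd⟩ := ABAPlus.ded_finite F.toABAF hded
        obtain ⟨A, hA, hTA⟩ := ABAPlus.chain_absorb hchain hcne hTfin hTsub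
        have : φ ∈ F.toABAF.cl A := ⟨ABAPlus.ded_mono _ hTA hTd, hasm⟩
        rw [(hcS hA).1.2.1] at this
        exact ⟨A, hA, this⟩
      · rintro φ ⟨A, hA, hφA⟩
        exact ⟨ABAF.Ded.assumption ⟨A, hA, hφA⟩, (hcS hA).1.1 hφA⟩
    · -- conflict free
      rintro (⟨A', hA'U, β, hβU, hd, hmin⟩ | ⟨B', hB'U, α, hαU, hd, β', hβ'B, hlt⟩)
      · obtain ⟨T, hTsub, hTfin, hTd⟩ := ABAPlus.ded_finite F.toABAF hd
        obtain ⟨A, hA, hTA⟩ := ABAPlus.chain_absorb hchain hcne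
          (hTfin.insert β)
          (Set.insert_subset hβU (hTsub.trans hA'U))
        have hself : F.LtAttacks A A := Or.inl ⟨T,
          (Set.subset_insert β T).trans hTA, β, hTA (Set.mem_insert β T),
          hTd, fun α' hα' => hmin α' (hTsub hα')⟩
        exact (hcS hA).1.2.2.1 hself
      · obtain ⟨T, hTsub, hTfin, hTd⟩ := ABAPlus.ded_finite F.toABAF hd
        obtain ⟨A, hA, hTA⟩ := ABAPlus.chain_absorb hchain hcne
          ((hTfin.insert β').insert α)
          (Set.insert_subset hαU (Set.insert_subset (hB'U hβ'B)
            (hTsub.trans hB'U)))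
        have hT' : insert β' T ⊆ A := (Set.subset_insert α _).trans hTA
        have hself : F.LtAttacks A A := Or.inr ⟨insert β' T,
          hT', α, hTA (Set.mem_insert α _),
          ABAPlus.ded_mono _ (Set.subset_insert β' T) hTd,
          β', Set.mem_insert β' T, hlt⟩
        exact (hcS hA).1.2.2.1 hself
    · -- defends
      intro B hB hBcl hBatt
      rcases hBatt with ⟨B', hB'B, β, hβU, hd, hmin⟩ | ⟨U', hU'U, α, hαB, hd, β', hβ'U, hlt⟩
      · obtain ⟨A, hA, hβA⟩ := hβU
        have : F.LtAttacks B A := Or.inl ⟨B', hB'B, β, hβA, hd, hmin⟩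
        exact ABAPlus.ltAttacks_mono_left F (Set.subset_sUnion_of_mem hA)
          ((hcS hA).1.2.2.2 B hB hBcl this)
      · obtain ⟨T, hTsub, hTfin, hTd⟩ := ABAPlus.ded_finite F.toABAF hd
        obtain ⟨A, hA, hTA⟩ := ABAPlus.chain_absorb hchain hcne
          (hTfin.insert β')
          (Set.insert_subset (hU'U hβ'U) (hTsub.trans hU'U))
        have : F.LtAttacks B A := Or.inr ⟨insert β' T, hTA, α, hαB,
          ABAPlus.ded_mono _ (Set.subset_insert β' T) hTd,
          β', Set.mem_insert β' T, hlt⟩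
        exact ABAPlus.ltAttacks_mono_left F (Set.subset_sUnion_of_mem hA)
          ((hcS hA).1.2.2.2 B hB hBcl this)
    · -- E ⊆ union
      obtain ⟨A, hA⟩ := hcne
      exact ((hcS hA).2).trans (Set.subset_sUnion_of_mem hA)
  obtain ⟨M, hEM, hMmax⟩ := zorn_subset_nonempty S key E ⟨h, Set.Subset.rfl⟩
  refine ⟨M, ⟨hMmax.prop.1, fun E' hE' hME' => ?_⟩, hEM⟩
  exact (hMmax.2 ⟨hE', hEM.trans hME'⟩ hME').antisymm hME'
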